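/- Let k ≥ 2 and let n be a positive integer. Suppose a, b, c, d are positive integers with a < b and c < d such that each of ac + n, bc + n, ad + n, and bd + n is a perfect k-th power. Then bd ≥ k^k · n^(−k) · (ac)^(k−1), i.e., n^k · bd ≥ k^k · (ac)^(k−1). -/

import Mathlib

/-- (m+1)^(j+1) ≥ m^(j+1) + (j+1)*m^j -/
lemma aux_pow (m j : ℕ) : m ^ (j+1) + (j+1) * m ^ j ≤ (m+1) ^ (j+1) := by
  induction j with
  | zero => simp
  | succ j ih =>
    have h : (m+1) ^ (j+2) = (m+1) * (m+1)^(j+1) := by ring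
    calc m ^ (j+2) + (j+2) * m ^ (j+1)
        ≤ (m+1) * (m ^ (j+1) + (j+1) * m ^ j) := by
          have e : (m+1) * (m ^ (j+1) + (j+1) * m ^ j)
              = m ^ (j+2) + (j+2) * m ^ (j+1) + (j+1) * m ^ j := by ring
          omega
      _ ≤ (m+1) * (m+1)^(j+1) := Nat.mul_le_mul_left _ ih
      _ = (m+1) ^ (j+2) := h.symm

/-- gap principle for positive n: if a < b, c < d are positive integers
and ac+n, bc+n, ad+n, bd+n are all perfect k-th powers (k ≥ 2, n > 0), then
n^k·bd ≥ k^k·(ac)^(k−1). -/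
theorem stmt_4 (k n a b c d : ℕ) (hk : 2 ≤ k) (hn : 0 < n)
    (ha : 0 < a) (hc : 0 < c) (hab : a < b) (hcd : c < d)
    (h1 : ∃ x : ℕ, a * c + n = x ^ k) (h2 : ∃ x : ℕ, b * c + n = x ^ k)
    (h3 : ∃ x : ℕ, a * d + n = x ^ k) (h4 : ∃ x : ℕ, b * d + n = x ^ k) :
    k ^ k * (a * c) ^ (k - 1) ≤ n ^ k * (b * d) := by
  obtain ⟨x, hx⟩ := h1
  obtain ⟨y, hy⟩ := h2
  obtain ⟨z, hz⟩ := h3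
  obtain ⟨w, hw⟩ := h4
  obtain ⟨s, hs⟩ : ∃ s, b = a + (s + 1) := ⟨b - a - 1, by omega⟩
  obtain ⟨t, ht⟩ : ∃ t, d = c + (t + 1) := ⟨d - c - 1, by omega⟩
  have hk0 : k ≠ 0 := by omega
  -- key identity
  have key : (x * w) ^ k = (y * z) ^ k + n * ((s+1) * (t+1)) := by
    have : (x * w) ^ k = x ^ k * w ^ k := by ring
    rw [this, ← hx, ← hw]
    have : (y * z) ^ k = y ^ k * z ^ k := by ring
    rw [this, ← hy, ← hz, hs, ht]
    ring
  have hlt : y * z < x * w := by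
    have : (y * z) ^ k < (x * w) ^ k := by
      rw [key]
      have : 0 < n * ((s+1) * (t+1)) := by positivity
      omega
    exact lt_of_pow_lt_pow_left₀ k (Nat.zero_le _) this
  -- so x*w ≥ y*z + 1, hence (x*w)^k ≥ (y*z)^k + k*(y*z)^(k-1)
  obtain ⟨j, hj⟩ : ∃ j, k = j + 1 := ⟨k - 1, by omega⟩
  have hstep : (y*z) ^ k + k * (y*z) ^ (k-1) ≤ (x*w) ^ k := by
    calc (y*z) ^ k + k * (y*z) ^ (k-1) = (y*z) ^ (j+1) + (j+1) * (y*z) ^ j := by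
          rw [hj]; simp
      _ ≤ (y*z + 1) ^ (j+1) := aux_pow _ _
      _ ≤ (x*w) ^ (j+1) := Nat.pow_le_pow_left hlt _
      _ = (x*w) ^ k := by rw [hj]
  have h6 : k * (y*z) ^ (k-1) ≤ n * (b * d) := by
    have h61 : k * (y*z) ^ (k-1) ≤ n * ((s+1)*(t+1)) := by omega
    have h62 : (s+1)*(t+1) ≤ b * d := by
      apply Nat.mul_le_mul <;> omega
    calc k * (y*z) ^ (k-1) ≤ n * ((s+1)*(t+1)) := h61
      _ ≤ n * (b*d) := Nat.mul_le_mul_left _ h62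
  have h7 : a * c * (b * d) ≤ (y*z) ^ k := by
    have : (y*z) ^ k = (b*c + n) * (a*d + n) := by
      rw [hy, hz]; ring
    rw [this]
    calc a * c * (b*d) = (b*c) * (a*d) := by ring
      _ ≤ (b*c + n) * (a*d + n) := Nat.mul_le_mul (Nat.le_add_right _ _) (Nat.le_add_right _ _)
  -- raise h6 to the k-th power
  have h8 : (k * (y*z) ^ (k-1)) ^ k ≤ (n * (b*d)) ^ k := Nat.pow_le_pow_left h6 k
  have h9 : (k * (y*z) ^ (k-1)) ^ k = k ^ k * ((y*z) ^ k) ^ (k-1) := by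
    rw [mul_pow, ← pow_mul, ← pow_mul, Nat.mul_comm (k-1) k]
  have h10 : k ^ k * (a * c * (b*d)) ^ (k-1) ≤ (n * (b*d)) ^ k := by
    calc k ^ k * (a * c * (b*d)) ^ (k-1) ≤ k ^ k * ((y*z) ^ k) ^ (k-1) :=
          Nat.mul_le_mul_left _ (Nat.pow_le_pow_left h7 _)
      _ = (k * (y*z) ^ (k-1)) ^ k := h9.symm
      _ ≤ (n * (b*d)) ^ k := h8
  -- cancel (b*d)^(k-1)
  have hbd : 0 < b * d := Nat.mul_pos (by omega) (by omega)
  have hcan : 0 < (b*d) ^ (k-1) := pow_pos hbd _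
  apply Nat.le_of_mul_le_mul_right _ hcan
  calc k ^ k * (a*c) ^ (k-1) * (b*d) ^ (k-1) = k ^ k * (a * c * (b*d)) ^ (k-1) := by
        rw [mul_pow]; ring
    _ ≤ (n * (b*d)) ^ k := h10
    _ = n ^ k * (b*d) * (b*d) ^ (k-1) := by
        have e : (b*d) ^ k = (b*d) * (b*d) ^ (k-1) := by
          rw [hj]; simp [pow_succ]; ring
        rw [mul_pow, e]; ring
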